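/- Fix an integer K ≥ 1 and γ, ε ∈ (0,1), and let F and D be as defined. Suppose x̄ ∈ D is a fixed point of F such that every fixed point y ∈ D of F satisfies y_k ≤ x̄_k for all k < K. Then for every x⁰ ∈ D with x̄_k ≤ x⁰_k for all k < K, the iterates x^{t+1} = F(x^t) converge to x̄ as t → ∞. (That is, if the initial record distribution dominates the most cooperative steady state, the record distribution converges to the most cooperative steady state.) -/
import Mathlib


/-- The set of monotone cumulative record distributions (only indices `< K` matter). -/
def grimD (K : ℕ) : Set (ℕ → ℝ) :=
  {x | 0 ≤ x 0 ∧ (∀ k, k + 1 < K → x k ≤ x (k + 1)) ∧ x (K - 1) ≤ 1}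

/-- The GrimK one-period update map on cumulative record distributions. -/
def grimF (K : ℕ) (γ ε : ℝ) (x : ℕ → ℝ) : ℕ → ℝ := fun k =>
  if k = 0 then 1 - γ + γ * (1 - ε) * x (K - 1) * x 0
  else 1 - γ + γ * x (k - 1) + γ * (1 - ε) * x (K - 1) * (x k - x (k - 1))

lemma grimF_zero (K : ℕ) (γ ε : ℝ) (x : ℕ → ℝ) :
    grimF K γ ε x 0 = 1 - γ + γ * (1 - ε) * x (K - 1) * x 0 := by
  simp [grimF]

lemma grimF_succ (K : ℕ) (γ ε : ℝ) (x : ℕ → ℝ) (m : ℕ) :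
    grimF K γ ε x (m + 1)
      = 1 - γ + γ * x m + γ * (1 - ε) * x (K - 1) * (x (m + 1) - x m) := by
  simp [grimF]

lemma grimD_mono {K : ℕ} {x : ℕ → ℝ} (hx : x ∈ grimD K) :
    ∀ j k, j ≤ k → k < K → x j ≤ x k := by
  intro j k
  induction k with
  | zero =>
    intro hj _
    have : j = 0 := Nat.le_zero.mp hj
    subst this; exact le_rfl
  | succ m ih =>
    intro hj hk
    rcases Nat.eq_or_lt_of_le hj with h | h
    · subst h; exact le_rfl
    · exact le_trans (ih (Nat.lt_succ_iff.mp h) (Nat.lt_of_succ_lt hk)) (hx.2.1 m hk)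

lemma grimD_nonneg {K : ℕ} (hK : 1 ≤ K) {x : ℕ → ℝ} (hx : x ∈ grimD K) :
    ∀ k < K, 0 ≤ x k := fun k hk =>
  le_trans hx.1 (grimD_mono hx 0 k (Nat.zero_le k) hk)

lemma grimD_le_one {K : ℕ} (hK : 1 ≤ K) {x : ℕ → ℝ} (hx : x ∈ grimD K) :
    ∀ k < K, x k ≤ 1 := fun k hk =>
  le_trans (grimD_mono hx k (K - 1) (by omega) (by omega)) hx.2.2

lemma grimF_mono {K : ℕ} (hK : 1 ≤ K) {γ ε : ℝ}
    (hγ : γ ∈ Set.Ioo (0:ℝ) 1) (hε : ε ∈ Set.Ioo (0:ℝ) 1)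
    {x y : ℕ → ℝ} (hx : x ∈ grimD K) (hy : y ∈ grimD K)
    (hle : ∀ k < K, x k ≤ y k) :
    ∀ k < K, grimF K γ ε x k ≤ grimF K γ ε y k := by
  obtain ⟨hγ1, hγ2⟩ := hγ
  obtain ⟨hε1, hε2⟩ := hε
  have hKK : K - 1 < K := by omega
  have hxK1 : x (K - 1) ≤ 1 := grimD_le_one hK hx _ hKK
  have hxK0 : 0 ≤ x (K - 1) := grimD_nonneg hK hx _ hKK
  have hyK0 : 0 ≤ y (K - 1) := grimD_nonneg hK hy _ hKK
  have hleK : x (K - 1) ≤ y (K - 1) := hle _ hKK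
  have hb : (0:ℝ) ≤ γ * (1 - ε) := by nlinarith
  have h1e : 0 ≤ 1 - (1 - ε) * x (K - 1) := by nlinarith
  intro k hk
  cases k with
  | zero =>
    rw [grimF_zero, grimF_zero]
    have h0 : x 0 ≤ y 0 := hle 0 hk
    have hy00 : 0 ≤ y 0 := grimD_nonneg hK hy 0 hk
    nlinarith [mul_nonneg (mul_nonneg hb (sub_nonneg.2 hleK)) hy00,
      mul_nonneg (mul_nonneg hb hxK0) (sub_nonneg.2 h0)]
  | succ m =>
    rw [grimF_succ, grimF_succ]
    have hm : m < K := by omega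
    have h1 : x m ≤ y m := hle m hm
    have h2 : x (m + 1) ≤ y (m + 1) := hle _ hk
    have hymono : y m ≤ y (m + 1) := hy.2.1 m hk
    nlinarith [mul_nonneg (mul_nonneg hγ1.le (sub_nonneg.2 h1)) h1e,
      mul_nonneg (mul_nonneg hb hxK0) (sub_nonneg.2 h2),
      mul_nonneg (mul_nonneg hb (sub_nonneg.2 hleK)) (sub_nonneg.2 hymono)]

lemma grimF_mem {K : ℕ} (hK : 1 ≤ K) {γ ε : ℝ}
    (hγ : γ ∈ Set.Ioo (0:ℝ) 1) (hε : ε ∈ Set.Ioo (0:ℝ) 1)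
    {x : ℕ → ℝ} (hx : x ∈ grimD K) : grimF K γ ε x ∈ grimD K := by
  obtain ⟨hγ1, hγ2⟩ := hγ
  obtain ⟨hε1, hε2⟩ := hε
  have hKK : K - 1 < K := by omega
  have hxK1 : x (K - 1) ≤ 1 := grimD_le_one hK hx _ hKK
  have hxK0 : 0 ≤ x (K - 1) := grimD_nonneg hK hx _ hKK
  have hb : (0:ℝ) ≤ γ * (1 - ε) := by nlinarith
  have h1e : 0 ≤ 1 - (1 - ε) * x (K - 1) := by nlinarith
  refine ⟨?_, ?_, ?_⟩
  · rw [grimF_zero]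
    have h00 : 0 ≤ x 0 := hx.1
    nlinarith [mul_nonneg (mul_nonneg hb hxK0) h00]
  · intro k hk
    cases k with
    | zero =>
      rw [grimF_zero, grimF_succ]
      have h00 : 0 ≤ x 0 := hx.1
      have h01 : x 0 ≤ x 1 := hx.2.1 0 hk
      nlinarith [mul_nonneg (mul_nonneg hγ1.le h00) h1e,
        mul_nonneg (mul_nonneg hb hxK0) (sub_nonneg.2 h01)]
    | succ m =>
      rw [grimF_succ, grimF_succ]
      have hmono1 : x m ≤ x (m + 1) := hx.2.1 m (by omega)
      have hmono2 : x (m + 1) ≤ x (m + 2) := hx.2.1 (m + 1) hk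
      nlinarith [mul_nonneg (mul_nonneg hγ1.le (sub_nonneg.2 hmono1)) h1e,
        mul_nonneg (mul_nonneg hb hxK0) (sub_nonneg.2 hmono2)]
  · obtain ⟨m, rfl⟩ : ∃ m, K = m + 1 := ⟨K - 1, by omega⟩
    have hm : m + 1 - 1 = m := by omega
    cases m with
    | zero =>
      rw [hm, grimF_zero, hm]
      have h00 : 0 ≤ x 0 := hx.1
      have h01 : x 0 ≤ 1 := by simpa using hx.2.2
      have hsq : x 0 * x 0 ≤ 1 := by nlinarith
      nlinarith [mul_le_mul_of_nonneg_left hsq hb, mul_pos hγ1 hε1]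
    | succ n =>
      rw [hm, grimF_succ, hm]
      have hmono : x n ≤ x (n + 1) := hx.2.1 n (by omega)
      have h1 : x (n + 1) ≤ 1 := by simpa using hx.2.2
      have hn0 : 0 ≤ x (n + 1) := grimD_nonneg hK hx (n + 1) (by omega)
      nlinarith [mul_nonneg (mul_nonneg hγ1.le (sub_nonneg.2 hmono))
          (by nlinarith : (0:ℝ) ≤ 1 - (1 - ε) * x (n + 1))]

theorem stmt_16 (K : ℕ) (hK : 1 ≤ K) (γ ε : ℝ)
    (hγ : γ ∈ Set.Ioo (0:ℝ) 1) (hε : ε ∈ Set.Ioo (0:ℝ) 1)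
    (xbar : ℕ → ℝ) (hxbar : xbar ∈ grimD K)
    (hfix : ∀ k < K, grimF K γ ε xbar k = xbar k)
    (hmax : ∀ y ∈ grimD K, (∀ k < K, grimF K γ ε y k = y k) → ∀ k < K, y k ≤ xbar k)
    (x0 : ℕ → ℝ) (hx0 : x0 ∈ grimD K) (hdom : ∀ k < K, xbar k ≤ x0 k)
    (seq : ℕ → ℕ → ℝ) (hseq0 : seq 0 = x0)
    (hseq : ∀ t, seq (t + 1) = grimF K γ ε (seq t)) :
    ∀ k < K, Filter.Tendsto (fun t => seq t k) Filter.atTop (nhds (xbar k)) := by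
  have hKK : K - 1 < K := by omega
  set e : ℕ → ℝ := fun _ => 1 with he_def
  have he : e ∈ grimD K := ⟨zero_le_one, fun _ _ => le_rfl, le_rfl⟩
  set es : ℕ → ℕ → ℝ := fun t => (grimF K γ ε)^[t] e with hes_def
  have hes0 : es 0 = e := rfl
  have hesS : ∀ t, es (t + 1) = grimF K γ ε (es t) := fun t =>
    Function.iterate_succ_apply' (grimF K γ ε) t e
  -- all iterates stay in grimD
  have hesD : ∀ t, es t ∈ grimD K := by
    intro t
    induction t with
    | zero => exact he
    | succ t ih => rw [hesS]; exact grimF_mem hK hγ hε ih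
  have hseqD : ∀ t, seq t ∈ grimD K := by
    intro t
    induction t with
    | zero => rw [hseq0]; exact hx0
    | succ t ih => rw [hseq]; exact grimF_mem hK hγ hε ih
  -- xbar ≤ es t
  have hxbar_le_es : ∀ t, ∀ k < K, xbar k ≤ es t k := by
    intro t
    induction t with
    | zero => intro k hk; exact grimD_le_one hK hxbar k hk
    | succ t ih =>
      intro k hk
      rw [hesS]
      calc xbar k = grimF K γ ε xbar k := (hfix k hk).symm
        _ ≤ grimF K γ ε (es t) k := grimF_mono hK hγ hε hxbar (hesD t) ih k hk
  have hxbar_le_seq : ∀ t, ∀ k < K, xbar k ≤ seq t k := by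
    intro t
    induction t with
    | zero => intro k hk; rw [hseq0]; exact hdom k hk
    | succ t ih =>
      intro k hk
      rw [hseq]
      calc xbar k = grimF K γ ε xbar k := (hfix k hk).symm
        _ ≤ grimF K γ ε (seq t) k := grimF_mono hK hγ hε hxbar (hseqD t) ih k hk
  have hseq_le_es : ∀ t, ∀ k < K, seq t k ≤ es t k := by
    intro t
    induction t with
    | zero => intro k hk; rw [hseq0, hes0]; exact grimD_le_one hK hx0 k hk
    | succ t ih =>
      intro k hk
      rw [hseq, hesS]
      exact grimF_mono hK hγ hε (hseqD t) (hesD t) ih k hk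
  -- es is antitone
  have hes_anti : ∀ t, ∀ k < K, es (t + 1) k ≤ es t k := by
    intro t
    induction t with
    | zero =>
      intro k hk
      rw [hesS]
      exact grimD_le_one hK (grimF_mem hK hγ hε he) k hk
    | succ t ih =>
      intro k hk
      calc es (t + 1 + 1) k = grimF K γ ε (es (t + 1)) k := by rw [hesS]
        _ ≤ grimF K γ ε (es t) k :=
            grimF_mono hK hγ hε (hesD (t + 1)) (hesD t) ih k hk
        _ = es (t + 1) k := by rw [hesS]
  set L : ℕ → ℝ := fun k => ⨅ t, es t k with hL_def
  have hbdd : ∀ k < K, BddBelow (Set.range fun t => es t k) := by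
    intro k hk
    refine ⟨xbar k, ?_⟩
    rintro _ ⟨t, rfl⟩
    exact hxbar_le_es t k hk
  have hLtend : ∀ k < K, Filter.Tendsto (fun t => es t k) Filter.atTop (nhds (L k)) := by
    intro k hk
    exact tendsto_atTop_ciInf
      (antitone_nat_of_succ_le (fun t => hes_anti t k hk)) (hbdd k hk)
  have hxbarL : ∀ k < K, xbar k ≤ L k := fun k hk =>
    le_ciInf (fun t => hxbar_le_es t k hk)
  have hLD : L ∈ grimD K := by
    refine ⟨?_, ?_, ?_⟩
    · exact le_trans (grimD_nonneg hK hxbar 0 (by omega)) (hxbarL 0 (by omega))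
    · intro k hk
      exact le_of_tendsto_of_tendsto' (hLtend k (by omega)) (hLtend (k + 1) hk)
        (fun t => (hesD t).2.1 k hk)
    · exact le_of_tendsto (hLtend (K - 1) hKK)
        (Filter.Eventually.of_forall fun t => grimD_le_one hK (hesD t) _ hKK)
  have hLfix : ∀ k < K, grimF K γ ε L k = L k := by
    intro k hk
    have h1 : Filter.Tendsto (fun t => es (t + 1) k) Filter.atTop (nhds (L k)) :=
      (hLtend k hk).comp (Filter.tendsto_add_atTop_nat 1)
    simp only [hesS] at h1
    have h2 : Filter.Tendsto (fun t => grimF K γ ε (es t) k) Filter.atTop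
        (nhds (grimF K γ ε L k)) := by
      cases k with
      | zero =>
        simp only [grimF_zero]
        exact tendsto_const_nhds.add
          ((tendsto_const_nhds.mul (hLtend (K - 1) hKK)).mul (hLtend 0 hk))
      | succ m =>
        have hm : m < K := by omega
        simp only [grimF_succ]
        exact (tendsto_const_nhds.add (tendsto_const_nhds.mul (hLtend m hm))).add
          ((tendsto_const_nhds.mul (hLtend (K - 1) hKK)).mul
            ((hLtend (m + 1) hk).sub (hLtend m hm)))
    exact tendsto_nhds_unique h2 h1
  have hLx : ∀ k < K, L k = xbar k := fun k hk =>
    le_antisymm (hmax L hLD hLfix k hk) (hxbarL k hk)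
  intro k hk
  have hes_tend : Filter.Tendsto (fun t => es t k) Filter.atTop (nhds (xbar k)) := by
    rw [← hLx k hk]; exact hLtend k hk
  exact tendsto_of_tendsto_of_tendsto_of_le_of_le
    (tendsto_const_nhds) hes_tend
    (fun t => hxbar_le_seq t k hk) (fun t => hseq_le_es t k hk)
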